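/- Let V be a finite set and let ρ = ρ₀ρ₁ρ₂⋯ be an infinite sequence over V, and let F = Inf(ρ) be the set of elements occurring infinitely often in ρ. Then the scores of F along prefixes of ρ tend to infinity: for every k ∈ ℕ there exists n₀ such that score_F(ρ₀⋯ρ_n) ≥ k for all n ≥ n₀. -/

import Mathlib

/- Common definitions for finite-time Muller games, following
   McNaughton / Fearnley-Zimmermann. -/

universe u

variable {V : Type u}

/-- The occurrence set of a finite word: the set of letters occurring in it. -/
def occ (x : List V) : Set V := {v | v ∈ x}

/-- `score F w` is the maximal `k` such that some suffix of `w` decomposes as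
`x₁ ⋯ x_k` with every `xᵢ` non-empty and `occ xᵢ = F` (with `max ∅ = 0`). -/
noncomputable def score (F : Set V) (w : List V) : ℕ :=
  sSup {k | ∃ xs : List (List V), xs.length = k ∧
    (∀ x ∈ xs, x ≠ [] ∧ occ x = F) ∧ xs.flatten <:+ w}

/-- `maxscore 𝓕 w` is the maximum of `score F u` over `F ∈ 𝓕` and non-empty
prefixes `u` of `w`. -/
noncomputable def maxscore (𝓕 : Set (Set V)) (w : List V) : ℕ :=
  sSup {n | ∃ F ∈ 𝓕, ∃ u : List V, u ≠ [] ∧ u <+: w ∧ n = score F u}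

/-- `AccGood F w x` : `x` is a suffix of `w` with `occ x ⊆ F` such that removing
any suffix `y` of `x` from `w` does not change the score of `F`. -/
def AccGood (F : Set V) (w x : List V) : Prop :=
  x <:+ w ∧ occ x ⊆ F ∧
    ∀ y : List V, y <:+ x → score F (w.take (w.length - y.length)) = score F w

/-- The accumulator `acc F w` : the occurrence set of the longest suffix `x` of `w`
with `occ x ⊆ F` such that the score of `F` did not change during `x`. -/
noncomputable def acc (F : Set V) (w : List V) : Set V :=
  occ (w.drop (sInf {i | AccGood F w (w.drop i)}))

/-- A non-empty word `w` is an `𝓕`-burden if `maxscore 𝓕 w ≤ 2` and for every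
`F ∈ 𝓕` either `score F w = 0`, or `score F w = 1` and `acc F w = ∅`. -/
def Burden (𝓕 : Set (Set V)) (w : List V) : Prop :=
  w ≠ [] ∧ maxscore 𝓕 w ≤ 2 ∧
    ∀ F ∈ 𝓕, score F w = 0 ∨ (score F w = 1 ∧ acc F w = ∅)

/-- The maxscore of an infinite sequence: the supremum (in `ℕ∞`) of the scores of
sets `F ∈ 𝓕` over all non-empty finite prefixes. -/
noncomputable def maxscoreInf (𝓕 : Set (Set V)) (ρ : ℕ → V) : ℕ∞ :=
  ⨆ F ∈ 𝓕, ⨆ n : ℕ, (score F ((List.range (n + 1)).map ρ) : ℕ∞)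

/-- The set of elements occurring infinitely often in the sequence `ρ`. -/
def limitSet (ρ : ℕ → V) : Set V := {v | ∀ N : ℕ, ∃ n, N ≤ n ∧ ρ n = v}

/-- The indicator of a play: the union of all `F ∈ 𝓕` with positive score
together with all non-empty accumulators of members of `𝓕`. -/
noncomputable def ind (𝓕 : Set (Set V)) (w : List V) : Set V :=
  (⋃ F ∈ {F ∈ 𝓕 | 0 < score F w}, F) ∪ ⋃ F ∈ {F ∈ 𝓕 | acc F w ≠ ∅}, acc F w

/-- An arena: a finite directed graph together with the set `V0` of vertices of
Player 0 (Player 1 owns the complement), where every vertex has a successor. -/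
structure Arena (V : Type u) where
  V0 : Set V
  E : V → V → Prop
  exists_succ : ∀ v, ∃ u, E v u

/-- The positions of Player `i`. -/
def Arena.pos (G : Arena V) (i : Fin 2) : Set V :=
  if i = 0 then G.V0 else G.V0ᶜ

/-- A strategy maps a history (the play so far, excluding the current vertex)
and the current vertex to a successor vertex. -/
abbrev Strategy (V : Type u) := List V → V → V

/-- A strategy is legal if it always moves along edges. -/
def Arena.Legal (G : Arena V) (σ : Strategy V) : Prop :=
  ∀ w v, G.E v (σ w v)

/-- An infinite play in `G` starting in `v`. -/
def Arena.IsPlay (G : Arena V) (v : V) (ρ : ℕ → V) : Prop :=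
  ρ 0 = v ∧ ∀ n, G.E (ρ n) (ρ (n + 1))

/-- An infinite play is consistent with the strategy `σ` of Player `i`. -/
def Arena.ConsistentInf (G : Arena V) (i : Fin 2) (σ : Strategy V) (ρ : ℕ → V) : Prop :=
  ∀ n, ρ n ∈ G.pos i → ρ (n + 1) = σ ((List.range n).map ρ) (ρ n)

/-- Player `i` (with winning condition `𝓕i`) wins the Muller game from `v`. -/
def Arena.MullerWinFrom (G : Arena V) (i : Fin 2) (𝓕i : Set (Set V)) (v : V) : Prop :=
  ∃ σ : Strategy V, G.Legal σ ∧
    ∀ ρ : ℕ → V, G.IsPlay v ρ → G.ConsistentInf i σ ρ → limitSet ρ ∈ 𝓕i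

/-- The winning region of Player `i` in the Muller game. -/
def Arena.MullerWinRegion (G : Arena V) (i : Fin 2) (𝓕i : Set (Set V)) : Set V :=
  {v | G.MullerWinFrom i 𝓕i v}

/-- A finite play is consistent with the strategy `σ` of Player `i`. -/
def Arena.ConsistentFin (G : Arena V) (i : Fin 2) (σ : Strategy V) (w : List V) : Prop :=
  ∀ (u : List V) (v x : V), u ++ [v, x] <+: w → v ∈ G.pos i → x = σ u v

/-- A play of the finite-time Muller game with threshold `k`: a finite path
whose maxscore (over all subsets) is exactly `k`, while the maxscore of
its proper prefixes is `< k`. -/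
def FTPlay (G : Arena V) (k : ℕ) (w : List V) : Prop :=
  w.Chain' G.E ∧ maxscore (Set.univ : Set (Set V)) w = k ∧
    maxscore (Set.univ : Set (Set V)) w.dropLast < k

/-- Player `i` wins the finite-time Muller game with threshold `k` from `v`. -/
def FTWinFrom (G : Arena V) (i : Fin 2) (𝓕i : Set (Set V)) (k : ℕ) (v : V) : Prop :=
  ∃ σ : Strategy V, G.Legal σ ∧
    ∀ w : List V, FTPlay G k w → w.head? = some v → G.ConsistentFin i σ w →
      ∃ F ∈ 𝓕i, score F w = k

/-- The winning region of Player `i` in the finite-time Muller game. -/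
def FTWinRegion (G : Arena V) (i : Fin 2) (𝓕i : Set (Set V)) (k : ℕ) : Set V :=
  {v | FTWinFrom G i 𝓕i k v}

/-- A play of McNaughton's finite-time Muller game: a finite path such that some
set `F` reaches score `|F|! + 1`, while no set did so in a proper prefix. -/
def McNPlay (G : Arena V) (w : List V) : Prop :=
  w.Chain' G.E ∧ (∃ F : Set V, score F w = F.ncard.factorial + 1) ∧
    ∀ u : List V, u <+: w → u ≠ w →
      ∀ F : Set V, score F u ≠ F.ncard.factorial + 1

/-- Player `i` wins McNaughton's finite-time Muller game from `v`. -/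
def McNWinFrom (G : Arena V) (i : Fin 2) (𝓕i : Set (Set V)) (v : V) : Prop :=
  ∃ σ : Strategy V, G.Legal σ ∧
    ∀ w : List V, McNPlay G w → w.head? = some v → G.ConsistentFin i σ w →
      ∃ F ∈ 𝓕i, score F w = F.ncard.factorial + 1

/-- The winning region of Player `i` in McNaughton's finite-time Muller game. -/
def McNWinRegion (G : Arena V) (i : Fin 2) (𝓕i : Set (Set V)) : Set V :=
  {v | McNWinFrom G i 𝓕i v}

open Classical in
/-- The list `ρ₀ ⋯ ρₙ` of the first `n+1` vertices of the unique play that starts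
in `v` and is consistent with the strategy `σ` of Player `i` and the strategy `τ`
of the other player. -/
noncomputable def playList (G : Arena V) (i : Fin 2) (σ τ : Strategy V) (v : V) :
    ℕ → List V
  | 0 => [v]
  | n + 1 =>
      let w := playList G i σ τ v n
      let u := w.getLastD v
      w ++ [if u ∈ G.pos i then σ w.dropLast u else τ w.dropLast u]

/-- `playOf G i σ τ v` : the unique play starting in `v` that is consistent with
the strategy `σ` of Player `i` and the strategy `τ` of the other player. -/
noncomputable def playOf (G : Arena V) (i : Fin 2) (σ τ : Strategy V) (v : V)
    (n : ℕ) : V :=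
  (playList G i σ τ v n).getLastD v

/-- For an infinite sequence `ρ` over a finite set `V` with
`F = Inf(ρ)`, the scores of `F` along the prefixes of `ρ` tend to infinity. -/

private lemma stmt14_len_le_flatten {V : Type u} (xs : List (List V))
    (h : ∀ x ∈ xs, x ≠ []) : xs.length ≤ xs.flatten.length := by
  induction xs with
  | nil => simp
  | cons a t ih =>
    simp only [List.flatten_cons, List.length_append, List.length_cons]
    have ha : 1 ≤ a.length := List.length_pos_iff.mpr (h a (by simp))
    have := ih (fun x hx => h x (by simp [hx]))
    omega

private lemma stmt14_score_bdd {V : Type u} (F : Set V) (w : List V) :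
    BddAbove {k | ∃ xs : List (List V), xs.length = k ∧
      (∀ x ∈ xs, x ≠ [] ∧ occ x = F) ∧ xs.flatten <:+ w} := by
  refine ⟨w.length, fun k hk => ?_⟩
  obtain ⟨xs, hlen, hx, hsuf⟩ := hk
  calc k = xs.length := hlen.symm
    _ ≤ xs.flatten.length := stmt14_len_le_flatten _ (fun x hx' => (hx x hx').1)
    _ ≤ w.length := hsuf.length_le

theorem stmt_14 {V : Type u} [Fintype V] (ρ : ℕ → V) :
    ∀ k : ℕ, ∃ n0 : ℕ, ∀ n ≥ n0,
      k ≤ score (limitSet ρ) ((List.range (n + 1)).map ρ) := by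
  classical
  set F := limitSet ρ with hF
  -- Step 1: eventually all letters are in F
  have hA : ∃ N0 : ℕ, ∀ n, N0 ≤ n → ρ n ∈ F := by
    have h : ∀ v : V, v ∉ F → ∃ N, ∀ n, N ≤ n → ρ n ≠ v := by
      intro v hv
      simp only [hF, limitSet, Set.mem_setOf_eq] at hv
      push_neg at hv
      obtain ⟨N, hN⟩ := hv
      exact ⟨N, hN⟩
    choose g hg using h
    set f : V → ℕ := fun v => if hv : v ∈ F then 0 else g v hv with hf
    refine ⟨Finset.univ.sup f, fun n hn => ?_⟩
    by_contra hv
    have h1 : f (ρ n) ≤ Finset.univ.sup f := Finset.le_sup (Finset.mem_univ _)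
    have h2 : f (ρ n) = g (ρ n) hv := by simp [hf, hv]
    exact hg (ρ n) hv n (by omega) rfl
  obtain ⟨N0, hN0⟩ := hA
  -- Step 2: from any start, a finite window catches all of F
  have hB : ∀ s : ℕ, ∃ e, s ≤ e ∧ ∀ v ∈ F, ∃ m, s ≤ m ∧ m ≤ e ∧ ρ m = v := by
    intro s
    have h : ∀ v : V, v ∈ F → ∃ m, s ≤ m ∧ ρ m = v := fun v hv => hv s
    choose g hg using h
    set f : V → ℕ := fun v => if hv : v ∈ F then g v hv else s with hf
    refine ⟨s ⊔ Finset.univ.sup f, le_max_left _ _, fun v hv => ?_⟩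
    refine ⟨g v hv, (hg v hv).1, ?_, (hg v hv).2⟩
    have h1 : f v ≤ Finset.univ.sup f := Finset.le_sup (Finset.mem_univ _)
    have h2 : f v = g v hv := by simp [hf, hv]
    omega
  -- occurrence set of a full window
  have occ_blk : ∀ s t : ℕ, N0 ≤ s →
      (∀ v ∈ F, ∃ m, s ≤ m ∧ m < s + t ∧ ρ m = v) →
      occ ((List.range' s t).map ρ) = F := by
    intro s t hs hall
    ext v
    simp only [occ, Set.mem_setOf_eq, List.mem_map, List.mem_range'_1]
    constructor
    · rintro ⟨m, ⟨hm1, _⟩, rfl⟩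
      exact hN0 m (le_trans hs hm1)
    · intro hv
      obtain ⟨m, h1, h2, h3⟩ := hall v hv
      exact ⟨m, ⟨h1, h2⟩, h3⟩
  -- Step 3: decompositions into k+1 full blocks
  have hD : ∀ k : ℕ, ∃ n0, N0 ≤ n0 ∧ ∀ n, n0 ≤ n →
      ∃ xs : List (List V), xs.length = k + 1 ∧ (∀ x ∈ xs, x ≠ [] ∧ occ x = F) ∧
        xs.flatten = (List.range' N0 (n + 1 - N0)).map ρ := by
    intro k
    induction k with
    | zero =>
      obtain ⟨e, he1, he2⟩ := hB N0
      refine ⟨e, he1, fun n hn => ?_⟩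
      refine ⟨[(List.range' N0 (n + 1 - N0)).map ρ], rfl, ?_, by simp⟩
      intro x hx
      simp only [List.mem_singleton] at hx
      subst hx
      constructor
      · have hl : ((List.range' N0 (n + 1 - N0)).map ρ).length = n + 1 - N0 := by simp
        intro hnil
        rw [hnil] at hl
        simp at hl
        omega
      · refine occ_blk N0 (n + 1 - N0) le_rfl (fun v hv => ?_)
        obtain ⟨m, h1, h2, h3⟩ := he2 v hv
        exact ⟨m, h1, by omega, h3⟩
    | succ k ih =>
      obtain ⟨n0, hn0, hplay⟩ := ih
      obtain ⟨e, he1, he2⟩ := hB (n0 + 1)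
      refine ⟨e, by omega, fun n hn => ?_⟩
      obtain ⟨xs, hlen, hprop, hflat⟩ := hplay n0 le_rfl
      refine ⟨xs ++ [(List.range' (n0 + 1) (n - n0)).map ρ], by simp [hlen], ?_, ?_⟩
      · intro x hx
        rcases List.mem_append.mp hx with h | h
        · exact hprop x h
        · simp only [List.mem_singleton] at h
          subst h
          constructor
          · have hl : ((List.range' (n0 + 1) (n - n0)).map ρ).length = n - n0 := by simp
            intro hnil
            rw [hnil] at hl
            simp at hl
            omega
          · refine occ_blk (n0 + 1) (n - n0) (by omega) (fun v hv => ?_)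
            obtain ⟨m, h1, h2, h3⟩ := he2 v hv
            exact ⟨m, h1, by omega, h3⟩
      · rw [List.flatten_append, hflat]
        simp only [List.flatten_cons, List.flatten_nil, List.append_nil]
        rw [← List.map_append]
        congr 1
        have h := @List.range'_append_1 N0 (n0 + 1 - N0) (n - n0)
        have h1 : N0 + (n0 + 1 - N0) = n0 + 1 := by omega
        have h2 : (n0 + 1 - N0) + (n - n0) = n + 1 - N0 := by omega
        rw [h1, h2] at h
        exact h
  -- Conclusion
  intro k
  obtain ⟨n0, hn0, hplay⟩ := hD k
  refine ⟨n0, fun n hn => ?_⟩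
  obtain ⟨xs, hlen, hprop, hflat⟩ := hplay n hn
  have hsuf : xs.flatten <:+ (List.range (n + 1)).map ρ := by
    rw [hflat]
    refine ⟨(List.range' 0 N0).map ρ, ?_⟩
    rw [← List.map_append, List.range_eq_range']
    congr 1
    have h := @List.range'_append_1 0 N0 (n + 1 - N0)
    have h1 : (0 : ℕ) + N0 = N0 := by omega
    have h2 : N0 + (n + 1 - N0) = n + 1 := by omega
    rw [h1, h2] at h
    exact h
  have hmem : k + 1 ∈ {m | ∃ xs : List (List V), xs.length = m ∧
      (∀ x ∈ xs, x ≠ [] ∧ occ x = F) ∧ xs.flatten <:+ (List.range (n + 1)).map ρ} :=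
    ⟨xs, hlen, hprop, hsuf⟩
  have := le_csSup (stmt14_score_bdd F ((List.range (n + 1)).map ρ)) hmem
  calc k ≤ k + 1 := by omega
    _ ≤ _ := this
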